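/- Let X be a first countable compact Hausdorff space. If φ : C(X) → C(X) is a surjective function satisfying range(conj(φ(f))·φ(g)) = range(conj(f)·g) for all f, g ∈ C(X), then there exist a homeomorphism ψ : X → X and a continuous function τ : X → ℂ with |τ| ≡ 1 such that φ(f)(x) = τ(x)·f(ψ(x)) for all x ∈ X, f ∈ C(X). -/

import Mathlib

open Filter Topology Set

namespace Stmt15Aux
set_option linter.unusedSectionVars false
set_option linter.unusedVariables false

noncomputable section

variable {X : Type*} [TopologicalSpace X] [CompactSpace X] [T2Space X]
  [FirstCountableTopology X]

/-- A "peak function" at `x`: complex-valued, real values in `[0,1]`,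
equal to `1` exactly at `x`. -/
def IsPeak (h : C(X, ℂ)) (x : X) : Prop :=
  (∀ y, ∃ t : ℝ, 0 ≤ t ∧ t ≤ 1 ∧ h y = t) ∧ h x = 1 ∧ ∀ y, h y = 1 → y = x

lemma peak_exists (x : X) : ∃ h : C(X, ℂ), IsPeak h x := by
  obtain ⟨f, hf1, -, -, hf⟩ := exists_continuous_one_zero_of_isCompact_of_isGδ
    (isCompact_singleton (x := x)) (IsGδ.singleton x) isClosed_empty (disjoint_empty _)
  refine ⟨⟨fun y => (f y : ℂ), by fun_prop⟩, fun y => ⟨f y, (hf y).1, (hf y).2, rfl⟩, ?_, ?_⟩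
  · have hx : x ∈ f ⁻¹' {1} := by rw [← hf1]; rfl
    simp only [ContinuousMap.coe_mk]
    exact_mod_cast (by exact hx : f x = 1)
  · intro y hy
    simp only [ContinuousMap.coe_mk] at hy
    have : f y = 1 := by exact_mod_cast hy
    have : y ∈ f ⁻¹' {1} := this
    rw [← hf1] at this
    exact this

lemma IsPeak.pow {h : C(X, ℂ)} {x : X} (hh : IsPeak h x) (n : ℕ) :
    IsPeak (h ^ (n + 1)) x := by
  obtain ⟨hval, hx1, huniq⟩ := hh
  refine ⟨fun y => ?_, ?_, fun y hy => ?_⟩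
  · obtain ⟨t, ht0, ht1, htv⟩ := hval y
    exact ⟨t ^ (n + 1), pow_nonneg ht0 _, pow_le_one₀ ht0 ht1, by
      simp [htv]⟩
  · simp [hx1]
  · obtain ⟨t, ht0, ht1, htv⟩ := hval y
    apply huniq
    rw [htv]
    simp only [ContinuousMap.pow_apply, htv] at hy
    have : (t : ℂ) ^ (n + 1) = ((t ^ (n + 1) : ℝ) : ℂ) := by push_cast; ring
    rw [this] at hy
    have ht : t ^ (n + 1) = 1 := by exact_mod_cast hy
    have h2 : t ^ (n + 1) ≤ t := pow_le_of_le_one ht0 ht1 (Nat.succ_ne_zero n)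
    have : t = 1 := le_antisymm ht1 (ht ▸ h2)
    rw [this]; norm_num

/-- Concentration lemma: if `v = F z * h z ^ n` is solvable for every `n`, with `h` a peak
at `x`, then `v = t * F x` for some `t ∈ [0,1]`. -/
lemma seq_lemma {h : C(X, ℂ)} {x : X} (hp : IsPeak h x) (F : C(X, ℂ)) (v : ℂ)
    (hv : ∀ n : ℕ, ∃ z, F z * (h z) ^ n = v) :
    ∃ t : ℝ, 0 ≤ t ∧ t ≤ 1 ∧ v = t * F x := by
  choose z hz using hv
  obtain ⟨a, κ, hκ, ha⟩ := CompactSpace.tendsto_subseq z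
  choose r hr0 hr1 hrv using fun n => hp.1 (z n)
  set b : ℕ → ℝ := fun k => r (κ k) ^ κ k with hb_def
  have hb : ∀ k, b k ∈ Icc (0 : ℝ) 1 := fun k =>
    ⟨pow_nonneg (hr0 _) _, pow_le_one₀ (hr0 _) (hr1 _)⟩
  obtain ⟨t, ht, κ', hκ', hb'⟩ := (isCompact_Icc (a := (0:ℝ)) (b := 1)).tendsto_subseq hb
  -- the constant value v equals the limit F a * t
  have hconst : ∀ k, F (z (κ (κ' k))) * ((b (κ' k) : ℝ) : ℂ) = v := by
    intro k
    have := hz (κ (κ' k))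
    rw [hrv (κ (κ' k))] at this
    rw [← this]
    norm_cast
  have hlim : Tendsto (fun k => F (z (κ (κ' k))) * ((b (κ' k) : ℝ) : ℂ)) atTop
      (𝓝 (F a * (t : ℂ))) := by
    apply Tendsto.mul
    · exact (F.continuous.tendsto a).comp (ha.comp hκ'.tendsto_atTop)
    · exact (Complex.continuous_ofReal.tendsto t).comp hb'
  have hv_eq : v = F a * (t : ℂ) := by
    have h1 : Tendsto (fun _ : ℕ => v) atTop (𝓝 (F a * (t : ℂ))) := by
      simpa only [hconst] using hlim
    exact tendsto_nhds_unique tendsto_const_nhds h1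
  by_cases hax : a = x
  · exact ⟨t, ht.1, ht.2, by rw [hv_eq, hax, mul_comm]⟩
  · -- here `t = 0`, since `h a < 1` near `a`
    obtain ⟨s, hs0, hs1, hsv⟩ := hp.1 a
    have hs_lt : s < 1 := by
      rcases lt_or_eq_of_le hs1 with h' | h'
      · exact h'
      · exact absurd (hp.2.2 a (by rw [hsv, h']; norm_num)) hax
    set c : ℝ := (s + 1) / 2 with hc_def
    have hsc : s < c := by simp only [hc_def]; linarith
    have hc1 : c < 1 := by simp only [hc_def]; linarith
    have hc0 : 0 ≤ c := by simp only [hc_def]; linarith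
    -- the real parts converge to s < c, so eventually r < c
    have hre : Tendsto (fun k => r (κ (κ' k))) atTop (𝓝 s) := by
      have : Tendsto (fun k => (h (z (κ (κ' k)))).re) atTop (𝓝 (h a).re) :=
        (Complex.continuous_re.tendsto _).comp
          ((h.continuous.tendsto a).comp (ha.comp hκ'.tendsto_atTop))
      simp only [hrv, Complex.ofReal_re] at this
      rw [hsv, Complex.ofReal_re] at this
      exact this
    have hev : ∀ᶠ k in atTop, r (κ (κ' k)) < c := hre.eventually_lt_const hsc
    have ht0 : t = 0 := by
      have hup : ∀ᶠ k in atTop, b (κ' k) ≤ c ^ k := by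
        filter_upwards [hev] with k hk
        calc b (κ' k) = r (κ (κ' k)) ^ κ (κ' k) := rfl
        _ ≤ c ^ κ (κ' k) := pow_le_pow_left₀ (hr0 _) hk.le _
        _ ≤ c ^ k := pow_le_pow_of_le_one hc0 hc1.le (hκ.comp hκ').le_apply
      have hcz : Tendsto (fun k => c ^ k) atTop (𝓝 (0:ℝ)) :=
        tendsto_pow_atTop_nhds_zero_of_lt_one hc0 hc1
      have hlow : ∀ᶠ k in atTop, (0:ℝ) ≤ b (κ' k) :=
        Eventually.of_forall fun k => (hb _).1
      exact tendsto_nhds_unique hb'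
        (squeeze_zero' hlow hup hcz)
    refine ⟨0, le_refl _, zero_le_one, ?_⟩
    rw [hv_eq, ht0]
    push_cast
    ring

/-- A pair of mutually inverse maps on `C(X, ℂ)` preserving ranges of `conj f * g`,
with `φ 1 = 1`. -/
def GoodPair (φ θ : C(X, ℂ) → C(X, ℂ)) : Prop :=
  (∀ f, φ (θ f) = f) ∧ (∀ f, θ (φ f) = f) ∧ φ 1 = 1 ∧
    ∀ f g : C(X, ℂ), Set.range (fun x => (starRingEnd ℂ) (φ f x) * φ g x) =
      Set.range (fun x => (starRingEnd ℂ) (f x) * g x)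

namespace GoodPair

variable {φ θ : C(X, ℂ) → C(X, ℂ)}

lemma symm (hp : GoodPair φ θ) : GoodPair θ φ := by
  obtain ⟨h1, h2, h3, h4⟩ := hp
  refine ⟨h2, h1, ?_, fun f g => ?_⟩
  · conv_lhs => rw [← h3]
    rw [h2]
  · have := h4 (θ f) (θ g)
    rw [h1, h1] at this
    exact this.symm

lemma mem_pair (hp : GoodPair φ θ) (f g : C(X, ℂ)) (y : X) :
    ∃ z, (starRingEnd ℂ) (f z) * g z = (starRingEnd ℂ) (φ f y) * φ g y := by
  have : (starRingEnd ℂ) (φ f y) * φ g y ∈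
      Set.range (fun x => (starRingEnd ℂ) (f x) * g x) := by
    rw [← hp.2.2.2 f g]; exact ⟨y, rfl⟩
  exact this

lemma mem_pair' (hp : GoodPair φ θ) (f g : C(X, ℂ)) (z : X) :
    ∃ y, (starRingEnd ℂ) (φ f y) * φ g y = (starRingEnd ℂ) (f z) * g z := by
  have : (starRingEnd ℂ) (f z) * g z ∈
      Set.range (fun x => (starRingEnd ℂ) (φ f x) * φ g x) := by
    rw [hp.2.2.2 f g]; exact ⟨z, rfl⟩
  exact this

lemma exists_val (hp : GoodPair φ θ) (g : C(X, ℂ)) (y : X) : ∃ z, φ g y = g z := by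
  obtain ⟨z, hz⟩ := hp.mem_pair 1 g y
  rw [hp.2.2.1] at hz
  simp only [ContinuousMap.one_apply, map_one, one_mul] at hz
  exact ⟨z, hz.symm⟩

lemma exists_val' (hp : GoodPair φ θ) (g : C(X, ℂ)) (z : X) : ∃ y, φ g y = g z := by
  obtain ⟨y, hy⟩ := hp.mem_pair' 1 g z
  rw [hp.2.2.1] at hy
  simp only [ContinuousMap.one_apply, map_one, one_mul] at hy
  exact ⟨y, hy⟩

lemma abs_le_one (hp : GoodPair φ θ) {g : C(X, ℂ)} (hg : ∀ z, ‖g z‖ ≤ 1)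
    (y : X) : ‖φ g y‖ ≤ 1 := by
  obtain ⟨z, hz⟩ := hp.exists_val g y
  rw [hz]; exact hg z

lemma peak_val (hp : GoodPair φ θ) {h : C(X, ℂ)} {x : X} (hh : IsPeak h x) (y : X) :
    ∃ t : ℝ, 0 ≤ t ∧ t ≤ 1 ∧ φ h y = t := by
  obtain ⟨z, hz⟩ := hp.exists_val h y
  obtain ⟨t, ht0, ht1, htv⟩ := hh.1 z
  exact ⟨t, ht0, ht1, by rw [hz, htv]⟩

lemma theta_eval_one (hp : GoodPair φ θ) {h : C(X, ℂ)} {x : X} (hh : IsPeak h x)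
    (k : C(X, ℂ)) (hk : ∀ z, ‖k z‖ ≤ 1)
    (hmem : ∃ y, (starRingEnd ℂ) (φ h y) * k y = 1) : θ k x = 1 := by
  obtain ⟨y, hy⟩ := hmem
  have hy' : (starRingEnd ℂ) (φ h y) * φ (θ k) y = 1 := by rw [hp.1]; exact hy
  obtain ⟨z, hz⟩ := hp.mem_pair h (θ k) y
  rw [hy'] at hz
  obtain ⟨t, ht0, ht1, htv⟩ := hh.1 z
  have hbdd : ‖θ k z‖ ≤ 1 := hp.symm.abs_le_one hk z
  have h1 : t * ‖θ k z‖ = 1 := by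
    have h2 := congrArg (‖·‖) hz
    rw [norm_mul, norm_one, htv] at h2
    rwa [Complex.norm_conj, Complex.norm_real, Real.norm_eq_abs, abs_of_nonneg ht0] at h2
  have htt : t = 1 := by nlinarith [norm_nonneg (θ k z)]
  have hz_eq : z = x := hh.2.2 z (by rw [htv, htt]; norm_num)
  rw [hz_eq, hh.2.1] at hz
  simpa using hz

lemma peak_unique (hp : GoodPair φ θ) {h : C(X, ℂ)} {x : X} (hh : IsPeak h x) {y₁ y₂ : X}
    (h₁ : φ h y₁ = 1) (h₂ : φ h y₂ = 1) : y₁ = y₂ := by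
  by_contra hne
  obtain ⟨k, hk0, hk1, hk01⟩ := exists_continuous_zero_one_of_isClosed
    (isClosed_singleton (x := y₂)) (isClosed_singleton (x := y₁))
    (by simpa using Ne.symm hne)
  set kc : C(X, ℂ) := ⟨fun y => (k y : ℂ), by fun_prop⟩ with hkc
  have hkc_abs : ∀ z, ‖kc z‖ ≤ 1 := fun z => by
    simp only [hkc, ContinuousMap.coe_mk, Complex.norm_real, Real.norm_eq_abs]
    rw [abs_of_nonneg (hk01 z).1]; exact (hk01 z).2
  have hkc'_abs : ∀ z, ‖(1 - kc) z‖ ≤ 1 := fun z => by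
    simp only [ContinuousMap.sub_apply, ContinuousMap.one_apply, hkc, ContinuousMap.coe_mk]
    rw [show (1 : ℂ) - (k z : ℂ) = ((1 - k z : ℝ) : ℂ) by push_cast; ring]
    rw [Complex.norm_real, Real.norm_eq_abs, abs_of_nonneg (by linarith [(hk01 z).2])]
    linarith [(hk01 z).1]
  have hθk : θ kc x = 1 := hp.theta_eval_one hh kc hkc_abs
    ⟨y₁, by simp [h₁, hkc, hk1 (mem_singleton y₁)]⟩
  have hθk' : θ (1 - kc) x = 1 := hp.theta_eval_one hh (1 - kc) hkc'_abs
    ⟨y₂, by simp [h₂, hkc, hk0 (mem_singleton y₂)]⟩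
  obtain ⟨w, hw⟩ := hp.symm.mem_pair kc (1 - kc) x
  rw [hθk, hθk'] at hw
  simp only [map_one, mul_one] at hw
  have : (starRingEnd ℂ) (kc w) * (1 - kc) w = 1 := hw
  have hreal : (k w) * (1 - k w) = 1 := by
    have h2 : ((k w * (1 - k w) : ℝ) : ℂ) = 1 := by
      rw [← this]
      simp only [ContinuousMap.sub_apply, ContinuousMap.one_apply, hkc, ContinuousMap.coe_mk,
        Complex.conj_ofReal]
      push_cast; ring
    exact_mod_cast h2
  nlinarith [(hk01 w).1, (hk01 w).2]

lemma exists_peak_point (hp : GoodPair φ θ) (x : X) :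
    ∃ y, ∀ h : C(X, ℂ), IsPeak h x → φ h y = 1 := by
  obtain ⟨h₀, hh₀⟩ := peak_exists x
  obtain ⟨y, hy⟩ := hp.exists_val' h₀ x
  rw [hh₀.2.1] at hy
  refine ⟨y, fun h hh => ?_⟩
  obtain ⟨y', hy'⟩ := hp.mem_pair' h₀ h x
  rw [hh₀.2.1, hh.2.1, map_one, one_mul] at hy'
  obtain ⟨t, ht0, ht1, htv⟩ := hp.peak_val hh₀ y'
  obtain ⟨s, hs0, hs1, hsv⟩ := hp.peak_val hh y'
  rw [htv, hsv, Complex.conj_ofReal] at hy'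
  have hts : t * s = 1 := by exact_mod_cast hy'
  have ht : t = 1 := by nlinarith
  have hs : s = 1 := by nlinarith
  have hy'x : φ h₀ y' = 1 := by rw [htv, ht]; norm_num
  have : y' = y := hp.peak_unique hh₀ hy'x hy
  rw [← this, hsv, hs]; norm_num

/-- The point map associated to a good pair. -/
def sigmaMap (hp : GoodPair φ θ) : X → X := fun x => (hp.exists_peak_point x).choose

lemma sigma_spec (hp : GoodPair φ θ) {h : C(X, ℂ)} {x : X} (hh : IsPeak h x) :
    φ h (hp.sigmaMap x) = 1 := (hp.exists_peak_point x).choose_spec h hh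

lemma phi_peak (hp : GoodPair φ θ) {h : C(X, ℂ)} {x : X} (hh : IsPeak h x) :
    IsPeak (φ h) (hp.sigmaMap x) :=
  ⟨hp.peak_val hh, hp.sigma_spec hh, fun y hy => hp.peak_unique hh hy (hp.sigma_spec hh)⟩

lemma eval_scale (hp : GoodPair φ θ) (f : C(X, ℂ)) (x : X) :
    ∃ t : ℝ, 0 ≤ t ∧ t ≤ 1 ∧ φ f (hp.sigmaMap x) = t * f x := by
  obtain ⟨h, hh⟩ := peak_exists x
  have hv : ∀ n : ℕ, ∃ z, (star f) z * (h z) ^ n =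
      (starRingEnd ℂ) (φ f (hp.sigmaMap x)) := by
    intro n
    match n with
    | 0 =>
      obtain ⟨z, hz⟩ := hp.exists_val f (hp.sigmaMap x)
      refine ⟨z, ?_⟩
      rw [pow_zero, mul_one, hz, ContinuousMap.star_apply, ← starRingEnd_apply]
    | m + 1 =>
      have h1 : φ (h ^ (m + 1)) (hp.sigmaMap x) = 1 := hp.sigma_spec (hh.pow m)
      obtain ⟨z, hz⟩ := hp.mem_pair f (h ^ (m + 1)) (hp.sigmaMap x)
      rw [h1, mul_one] at hz
      refine ⟨z, ?_⟩
      simpa only [ContinuousMap.pow_apply, ContinuousMap.star_apply,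
        starRingEnd_apply] using hz
  obtain ⟨t, ht0, ht1, htv⟩ := seq_lemma hh (star f) _ hv
  refine ⟨t, ht0, ht1, ?_⟩
  have h2 : φ f (hp.sigmaMap x) = (starRingEnd ℂ) ((t : ℂ) * (star f) x) := by
    rw [← Complex.conj_conj ((φ f) (hp.sigmaMap x)), htv]
  rw [h2, map_mul, Complex.conj_ofReal, ContinuousMap.star_apply, ← starRingEnd_apply,
    Complex.conj_conj]

lemma rho_sigma (hp : GoodPair φ θ) (x : X) : hp.symm.sigmaMap (hp.sigmaMap x) = x := by
  obtain ⟨h, hh⟩ := peak_exists x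
  have h1 : IsPeak (φ h) (hp.sigmaMap x) := hp.phi_peak hh
  have h2 : θ (φ h) (hp.symm.sigmaMap (hp.sigmaMap x)) = 1 := hp.symm.sigma_spec h1
  rw [hp.2.1 h] at h2
  exact hh.2.2 _ h2

lemma eval_eq (hp : GoodPair φ θ) (f : C(X, ℂ)) (x : X) :
    φ f (hp.sigmaMap x) = f x := by
  obtain ⟨t, ht0, ht1, htv⟩ := hp.eval_scale f x
  obtain ⟨s, hs0, hs1, hsv⟩ := hp.symm.eval_scale (φ f) (hp.sigmaMap x)
  rw [hp.rho_sigma, hp.2.1 f] at hsv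
  by_cases hfx : f x = 0
  · rw [htv, hfx, mul_zero]
  · rw [htv] at hsv
    have hst : ((s : ℂ) * t) * f x = 1 * f x := by rw [one_mul, mul_assoc, ← hsv]
    have hst' : ((s * t : ℝ) : ℂ) = 1 := by
      have := mul_right_cancel₀ hfx hst
      push_cast
      exact this
    have hst2 : s * t = 1 := by exact_mod_cast hst'
    have ht : t = 1 := by nlinarith
    rw [htv, ht]
    norm_num

lemma sigma_continuous (hp : GoodPair φ θ) : Continuous (hp.sigmaMap) := by
  apply SeqContinuous.continuous
  intro u x hu
  apply tendsto_of_subseq_tendsto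
  intro ns hns
  obtain ⟨a, ms, hms, ha⟩ := CompactSpace.tendsto_subseq (fun n => hp.sigmaMap (u (ns n)))
  refine ⟨ms, ?_⟩
  suffices hax : a = hp.sigmaMap x by
    rw [← hax]
    exact ha
  -- every continuous function agrees on `a` and `sigmaMap x`
  have key : ∀ G : C(X, ℂ), G a = G (hp.sigmaMap x) := by
    intro G
    have hGσ : ∀ y, G (hp.sigmaMap y) = θ G y := by
      intro y
      have := hp.eval_eq (θ G) y
      rwa [hp.1 G] at this
    have hsub : Tendsto (fun k => u (ns (ms k))) atTop (𝓝 x) :=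
      hu.comp (hns.comp hms.tendsto_atTop)
    have h1 : Tendsto (fun k => G (hp.sigmaMap (u (ns (ms k))))) atTop (𝓝 (θ G x)) := by
      simp only [hGσ]
      exact ((θ G).continuous.tendsto x).comp hsub
    have h2 : Tendsto (fun k => G (hp.sigmaMap (u (ns (ms k))))) atTop (𝓝 (G a)) :=
      (G.continuous.tendsto a).comp ha
    rw [tendsto_nhds_unique h2 h1, hGσ]
  by_contra hne
  obtain ⟨g, hg0, hg1, -⟩ := exists_continuous_zero_one_of_isClosed
    (isClosed_singleton (x := a)) (isClosed_singleton (x := hp.sigmaMap x))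
    (by simpa using hne)
  have := key ⟨fun y => (g y : ℂ), by fun_prop⟩
  simp only [ContinuousMap.coe_mk] at this
  rw [hg0 (mem_singleton a), hg1 (mem_singleton _)] at this
  norm_num at this

/-- The homeomorphism associated to a good pair. -/
def homeo (hp : GoodPair φ θ) : X ≃ₜ X where
  toFun := hp.symm.sigmaMap
  invFun := hp.sigmaMap
  left_inv := fun x => hp.symm.rho_sigma x
  right_inv := fun x => hp.rho_sigma x
  continuous_toFun := hp.symm.sigma_continuous
  continuous_invFun := hp.sigma_continuous

lemma eval_homeo (hp : GoodPair φ θ) (f : C(X, ℂ)) (x : X) :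
    φ f x = f (hp.homeo x) := by
  have h1 := hp.eval_eq f (hp.symm.sigmaMap x)
  have h2 : hp.sigmaMap (hp.symm.sigmaMap x) = x := hp.symm.rho_sigma x
  rw [h2] at h1
  exact h1.trans rfl

end GoodPair

lemma injective_of_range (φ : C(X, ℂ) → C(X, ℂ))
    (H : ∀ f g : C(X, ℂ), Set.range (fun x => (starRingEnd ℂ) (φ f x) * φ g x) =
      Set.range (fun x => (starRingEnd ℂ) (f x) * g x)) :
    Function.Injective φ := by
  intro f f' hff
  have key : ∀ g : C(X, ℂ), Set.range (fun x => (starRingEnd ℂ) (f x) * g x) =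
      Set.range (fun x => (starRingEnd ℂ) (f' x) * g x) := by
    intro g
    rw [← H f g, hff, H f' g]
  have step : ∀ u u' : C(X, ℂ), (∀ g : C(X, ℂ),
      Set.range (fun x => (starRingEnd ℂ) (u x) * g x) =
        Set.range (fun x => (starRingEnd ℂ) (u' x) * g x)) → ∀ x₀ : X,
      ∃ t : ℝ, 0 ≤ t ∧ t ≤ 1 ∧ (starRingEnd ℂ) (u x₀) = t * (starRingEnd ℂ) (u' x₀) := by
    intro u u' hk x₀
    obtain ⟨h, hh⟩ := peak_exists x₀
    have hv : ∀ n : ℕ, ∃ z, (star u') z * (h z) ^ n = (starRingEnd ℂ) (u x₀) := by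
      intro n
      have hmem : (starRingEnd ℂ) (u x₀) ∈
          Set.range (fun x => (starRingEnd ℂ) (u' x) * (h ^ n) x) := by
        rw [← hk (h ^ n)]
        exact ⟨x₀, by simp [hh.2.1]⟩
      obtain ⟨z, hz⟩ := hmem
      refine ⟨z, ?_⟩
      simpa only [ContinuousMap.pow_apply, ContinuousMap.star_apply,
        starRingEnd_apply] using hz
    obtain ⟨t, ht0, ht1, htv⟩ := seq_lemma hh (star u') _ hv
    exact ⟨t, ht0, ht1, by simpa only [ContinuousMap.star_apply,
      starRingEnd_apply] using htv⟩
  ext x₀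
  obtain ⟨t, ht0, ht1, htv⟩ := step f f' key x₀
  obtain ⟨s, hs0, hs1, hsv⟩ := step f' f (fun g => (key g).symm) x₀
  by_cases hz : f' x₀ = 0
  · have : f x₀ = 0 := by
      have := htv
      rw [hz, map_zero, mul_zero] at this
      simpa using this
    rw [this, hz]
  · have hcz : (starRingEnd ℂ) (f' x₀) ≠ 0 := by simpa using hz
    have hcomb : ((s * t : ℝ) : ℂ) * (starRingEnd ℂ) (f' x₀) =
        1 * (starRingEnd ℂ) (f' x₀) := by
      conv_rhs => rw [one_mul, hsv, htv]
      push_cast; ring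
    have hst : ((s * t : ℝ) : ℂ) = 1 := mul_right_cancel₀ hcz hcomb
    have hst' : s * t = 1 := by exact_mod_cast hst
    have ht : t = 1 := by nlinarith
    have : (starRingEnd ℂ) (f x₀) = (starRingEnd ℂ) (f' x₀) := by
      rw [htv, ht]; norm_num
    exact (starRingEnd ℂ).injective this

end
end Stmt15Aux

open Stmt15Aux in
theorem stmt15 {X : Type*} [TopologicalSpace X] [CompactSpace X] [T2Space X]
    [FirstCountableTopology X]
    (φ : C(X, ℂ) → C(X, ℂ)) (hsurj : Function.Surjective φ)
    (hrange : ∀ f g : C(X, ℂ),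
      Set.range (fun x => (starRingEnd ℂ) (φ f x) * φ g x) =
        Set.range (fun x => (starRingEnd ℂ) (f x) * g x)) :
    ∃ (ψ : X ≃ₜ X) (τ : C(X, ℂ)),
      (∀ x, ‖τ x‖ = 1) ∧
      ∀ (f : C(X, ℂ)) (x : X), φ f x = τ x * f (ψ x) := by
  classical
  -- `w = φ 1` is unimodular
  set w : C(X, ℂ) := φ 1 with hw_def
  have hw : ∀ x, (starRingEnd ℂ) (w x) * w x = 1 := by
    intro x
    have hmem : (starRingEnd ℂ) (w x) * w x ∈
        Set.range (fun x => (starRingEnd ℂ) ((1 : C(X, ℂ)) x) * (1 : C(X, ℂ)) x) := by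
      rw [← hrange 1 1]; exact ⟨x, rfl⟩
    obtain ⟨z, hz⟩ := hmem
    simpa using hz.symm
  -- normalized map
  set φ₂ : C(X, ℂ) → C(X, ℂ) := fun f => star w * φ f with hφ₂_def
  have hsw : ∀ x, (star w * w) x = 1 := by
    intro x
    simp only [ContinuousMap.mul_apply, ContinuousMap.star_apply]
    simp only [← starRingEnd_apply]
    exact hw x
  have hsurj₂ : Function.Surjective φ₂ := by
    intro g
    obtain ⟨f, hf⟩ := hsurj (w * g)
    refine ⟨f, ?_⟩
    rw [hφ₂_def]
    simp only [hf]
    ext x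
    simp only [ContinuousMap.mul_apply, ContinuousMap.star_apply]
    simp only [← starRingEnd_apply]
    rw [← mul_assoc, hw x, one_mul]
  have H₂ : ∀ f g : C(X, ℂ),
      Set.range (fun x => (starRingEnd ℂ) (φ₂ f x) * φ₂ g x) =
        Set.range (fun x => (starRingEnd ℂ) (f x) * g x) := by
    intro f g
    rw [← hrange f g]
    have hfun : (fun y => (starRingEnd ℂ) (φ₂ f y) * φ₂ g y) =
        (fun y => (starRingEnd ℂ) (φ f y) * φ g y) := by
      funext y
      simp only [hφ₂_def, ContinuousMap.mul_apply, ContinuousMap.star_apply]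
      simp only [← starRingEnd_apply]
      simp only [map_mul, Complex.conj_conj]
      have hr : w y * (starRingEnd ℂ) (φ f y) * ((starRingEnd ℂ) (w y) * φ g y) =
          ((starRingEnd ℂ) (w y) * w y) * ((starRingEnd ℂ) (φ f y) * φ g y) := by ring
      rw [hr, hw y, one_mul]
    rw [hfun]
  have hone₂ : φ₂ 1 = 1 := by
    ext x
    rw [hφ₂_def]
    simp only [← hw_def]
    exact hsw x
  have hinj₂ : Function.Injective φ₂ := injective_of_range φ₂ H₂
  set θ : C(X, ℂ) → C(X, ℂ) := fun g => Classical.choose (hsurj₂ g) with hθ_def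
  have hφθ : ∀ g, φ₂ (θ g) = g := fun g => Classical.choose_spec (hsurj₂ g)
  have hθφ : ∀ f, θ (φ₂ f) = f := fun f => hinj₂ (by rw [hφθ])
  have hp : GoodPair φ₂ θ := ⟨hφθ, hθφ, hone₂, H₂⟩
  refine ⟨hp.homeo, w, ?_, ?_⟩
  · intro x
    have h1 := hw x
    rw [mul_comm, Complex.mul_conj] at h1
    have h2 : Complex.normSq (w x) = 1 := by exact_mod_cast h1
    have h3 : ‖w x‖ ^ 2 = 1 := by rw [Complex.sq_norm]; exact h2
    nlinarith [norm_nonneg (w x)]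
  · intro f x
    have h1 := hp.eval_homeo f x
    have h2 : φ f x = w x * φ₂ f x := by
      simp only [hφ₂_def, ContinuousMap.mul_apply, ContinuousMap.star_apply]
      simp only [← starRingEnd_apply]
      rw [← mul_assoc, mul_comm (w x), hw x, one_mul]
    rw [h2, h1]
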